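/- arXiv:2109.14412 — 5 statements merged into one kernel-verified Lean document; each statement's English description precedes it below -/
import Mathlib

section
/- Let d ≥ 1, let Λ be a nonempty compact subset of ℝ^d, let f, g : Λ → ℝ be continuous, and let π be a Borel probability measure on Λ whose support is all of Λ (every nonempty relatively open subset of Λ has positive π-measure). Then there exist λ, λ' ∈ Λ (possibly λ = λ') and p ∈ (0,1) such that p·f(λ) + (1−p)·f(λ') ≤ ∫_Λ f dπ and p·g(λ) + (1−p)·g(λ') ≤ ∫_Λ g dπ. -/
open MeasureTheory

section Aux

variable {α : Type*} [MeasurableSpace α] [TopologicalSpace α] [OpensMeasurableSpace α]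
  [T2Space α] [CompactSpace α] [Nonempty α]

lemma aux_integrable (μ : Measure α) [IsProbabilityMeasure μ] {h : α → ℝ}
    (hc : Continuous h) : Integrable h μ := by
  rw [← integrableOn_univ]
  exact hc.continuousOn.integrableOn_compact isCompact_univ

/-- A continuous function on a nonempty compact space with nonpositive integral (w.r.t. a
probability measure) takes a nonpositive value somewhere. -/
lemma aux_exists_le_zero (μ : Measure α) [IsProbabilityMeasure μ] {h : α → ℝ}
    (hc : Continuous h) (hint : ∫ x, h x ∂μ ≤ 0) : ∃ x, h x ≤ 0 := by
  by_contra hcon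
  push_neg at hcon
  obtain ⟨x₀, -, hx₀⟩ := isCompact_univ.exists_isMinOn Set.univ_nonempty hc.continuousOn
  have h1 : h x₀ ≤ ∫ x, h x ∂μ := by
    calc h x₀ = ∫ _, h x₀ ∂μ := by simp
    _ ≤ ∫ x, h x ∂μ :=
      integral_mono (integrable_const _) (aux_integrable μ hc) fun y => hx₀ (Set.mem_univ y)
  linarith [hcon x₀]

/-- The "projection" sets used in the main argument are closed. -/
lemma aux_isClosed {Φ : ℝ × α → ℝ} {Ψ : α → ℝ} (hΦ : Continuous Φ) (hΨ : Continuous Ψ) :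
    IsClosed {t : ℝ | t ∈ Set.Icc (0:ℝ) 1 ∧ ∃ x, Φ (t, x) ≤ 0 ∧ Ψ x ≤ 0} := by
  have hC : IsCompact ((Set.Icc (0:ℝ) 1 ×ˢ (Set.univ : Set α)) ∩
      (Φ ⁻¹' Set.Iic 0 ∩ (fun p : ℝ × α => Ψ p.2) ⁻¹' Set.Iic 0)) := by
    apply (isCompact_Icc.prod isCompact_univ).inter_right
    exact ((isClosed_Iic.preimage hΦ).inter
      (isClosed_Iic.preimage (hΨ.comp continuous_snd)))
  have himg : {t : ℝ | t ∈ Set.Icc (0:ℝ) 1 ∧ ∃ x, Φ (t, x) ≤ 0 ∧ Ψ x ≤ 0} =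
      Prod.fst '' ((Set.Icc (0:ℝ) 1 ×ˢ (Set.univ : Set α)) ∩
      (Φ ⁻¹' Set.Iic 0 ∩ (fun p : ℝ × α => Ψ p.2) ⁻¹' Set.Iic 0)) := by
    ext t
    constructor
    · rintro ⟨ht, x, h1, h2⟩
      exact ⟨(t, x), ⟨⟨ht, trivial⟩, h1, h2⟩, rfl⟩
    · rintro ⟨⟨t', x⟩, ⟨⟨ht, -⟩, h1, h2⟩, rfl⟩
      exact ⟨ht, x, h1, h2⟩
  rw [himg]
  exact (hC.image continuous_fst).isClosed

end Aux

/-- For a nonempty compact `Λ ⊆ ℝ^d`, continuous `f g : Λ → ℝ`, and a Borel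
probability measure `π` on `Λ` with full support, there exist `λ, λ' ∈ Λ` and `p ∈ (0,1)`
such that both convex combinations are below the respective integrals. -/
theorem exists_pair_convex_comb_le_integral
    (d : ℕ) (hd : 1 ≤ d) (Λ : Set (EuclideanSpace ℝ (Fin d)))
    (hΛne : Λ.Nonempty) (hΛc : IsCompact Λ)
    (f g : Λ → ℝ) (hf : Continuous f) (hg : Continuous g)
    (π : Measure Λ) [IsProbabilityMeasure π]
    (hsupp : ∀ U : Set Λ, IsOpen U → U.Nonempty → 0 < π U) :
    ∃ (l l' : Λ) (p : ℝ), p ∈ Set.Ioo (0 : ℝ) 1 ∧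
      p * f l + (1 - p) * f l' ≤ ∫ x, f x ∂π ∧
      p * g l + (1 - p) * g l' ≤ ∫ x, g x ∂π := by
  haveI : CompactSpace ↥Λ := isCompact_iff_compactSpace.mp hΛc
  haveI : Nonempty ↥Λ := hΛne.to_subtype
  set If : ℝ := ∫ x, f x ∂π with hIf
  set Ig : ℝ := ∫ x, g x ∂π with hIg
  set F : ↥Λ → ℝ := fun x => f x - If with hFdef
  set G : ↥Λ → ℝ := fun x => g x - Ig with hGdef
  have hFc : Continuous F := hf.sub continuous_const
  have hGc : Continuous G := hg.sub continuous_const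
  have hfint : Integrable f π := aux_integrable π hf
  have hgint : Integrable g π := aux_integrable π hg
  have hFint : ∫ x, F x ∂π = 0 := by
    simp [hFdef, hIf, integral_sub hfint (integrable_const _)]
  have hGint : ∫ x, G x ∂π = 0 := by
    simp [hGdef, hIg, integral_sub hgint (integrable_const _)]
  -- it suffices to handle the normalized functions
  suffices h : ∃ (l l' : ↥Λ) (p : ℝ), p ∈ Set.Ioo (0:ℝ) 1 ∧
      p * F l + (1 - p) * F l' ≤ 0 ∧ p * G l + (1 - p) * G l' ≤ 0 by
    obtain ⟨l, l', p, hp, h1, h2⟩ := h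
    refine ⟨l, l', p, hp, ?_, ?_⟩
    · have e : p * (f l - If) + (1 - p) * (f l' - If)
          = p * f l + (1 - p) * f l' - If := by ring
      simp only [hFdef] at h1; rw [e] at h1; linarith
    · have e : p * (g l - Ig) + (1 - p) * (g l' - Ig)
          = p * g l + (1 - p) * g l' - Ig := by ring
      simp only [hGdef] at h2; rw [e] at h2; linarith
  -- for every t ∈ [0,1], the function t F + (1-t) G takes a nonpositive value
  have key : ∀ t : ℝ, ∃ x, t * F x + (1 - t) * G x ≤ 0 := by
    intro t
    apply aux_exists_le_zero π (by continuity)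
    have : ∫ x, (t * F x + (1 - t) * G x) ∂π
        = t * ∫ x, F x ∂π + (1 - t) * ∫ x, G x ∂π := by
      rw [integral_add, integral_const_mul, integral_const_mul]
      · exact (hfint.sub (integrable_const _)).const_mul t
      · exact (hgint.sub (integrable_const _)).const_mul (1 - t)
    rw [this, hFint, hGint]; simp
  -- the two closed sets
  set T₁ : Set ℝ := {t | t ∈ Set.Icc (0:ℝ) 1 ∧ ∃ x, t * F x + (1 - t) * G x ≤ 0 ∧ F x ≤ 0}
    with hT₁def
  set T₂ : Set ℝ := {t | t ∈ Set.Icc (0:ℝ) 1 ∧ ∃ x, t * F x + (1 - t) * G x ≤ 0 ∧ G x ≤ 0}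
    with hT₂def
  have hΦc : Continuous (fun p : ℝ × ↥Λ => p.1 * F p.2 + (1 - p.1) * G p.2) := by
    apply Continuous.add
    · exact continuous_fst.mul (hFc.comp continuous_snd)
    · exact (continuous_const.sub continuous_fst).mul (hGc.comp continuous_snd)
  have hT₁closed : IsClosed T₁ := aux_isClosed hΦc hFc
  have hT₂closed : IsClosed T₂ := aux_isClosed hΦc hGc
  have hunion : ∀ s ∈ Set.Icc (0:ℝ) 1, s ∈ T₁ ∪ T₂ := by
    intro s hs
    obtain ⟨x, hx⟩ := key s
    by_cases hFx : F x ≤ 0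
    · exact Or.inl ⟨hs, x, hx, hFx⟩
    · push_neg at hFx
      refine Or.inr ⟨hs, x, hx, ?_⟩
      by_contra hGx
      push_neg at hGx
      rcases eq_or_lt_of_le hs.1 with h0 | h0
      · rw [← h0] at hx; simp at hx; linarith
      · nlinarith [mul_pos h0 hFx,
          mul_nonneg (show (0:ℝ) ≤ 1 - s by linarith [hs.2]) hGx.le]
  have h1T₁ : (1:ℝ) ∈ T₁ := by
    obtain ⟨x, hx⟩ := key 1
    have hFx : F x ≤ 0 := by simpa using hx
    exact ⟨⟨zero_le_one, le_refl 1⟩, x, hx, hFx⟩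
  have hbdd : BddBelow T₁ := ⟨0, fun s hs => hs.1.1⟩
  set t : ℝ := sInf T₁ with htdef
  have htT₁ : t ∈ T₁ := hT₁closed.csInf_mem ⟨1, h1T₁⟩ hbdd
  have htIcc : t ∈ Set.Icc (0:ℝ) 1 := htT₁.1
  obtain ⟨x, hx, hFx⟩ := htT₁.2
  have htT₂ : t ∈ T₂ := by
    rcases eq_or_lt_of_le htIcc.1 with h0 | h0
    · refine ⟨htIcc, x, hx, ?_⟩
      rw [← h0] at hx; simpa using hx
    · have hsub : Set.Ico (0:ℝ) t ⊆ T₂ := by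
        intro s hs
        have hs1 : s ∈ Set.Icc (0:ℝ) 1 := ⟨hs.1, le_trans hs.2.le htIcc.2⟩
        rcases hunion s hs1 with h | h
        · exact absurd (csInf_le hbdd h) (not_le.mpr hs.2)
        · exact h
      have hcl : t ∈ closure (Set.Ico (0:ℝ) t) := by
        rw [closure_Ico h0.ne]
        exact ⟨h0.le, le_refl t⟩
      have h2 : t ∈ closure T₂ := closure_mono hsub hcl
      rwa [hT₂closed.closure_eq] at h2
  obtain ⟨y, hy, hGy⟩ := htT₂.2
  by_cases hGx : G x ≤ 0
  · have e1 : (1:ℝ)/2 * F x + (1 - 1/2) * F x = F x := by ring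
    have e2 : (1:ℝ)/2 * G x + (1 - 1/2) * G x = G x := by ring
    exact ⟨x, x, 1/2, ⟨by norm_num, by norm_num⟩, by rw [e1]; exact hFx, by rw [e2]; exact hGx⟩
  by_cases hFy : F y ≤ 0
  · have e1 : (1:ℝ)/2 * F y + (1 - 1/2) * F y = F y := by ring
    have e2 : (1:ℝ)/2 * G y + (1 - 1/2) * G y = G y := by ring
    exact ⟨y, y, 1/2, ⟨by norm_num, by norm_num⟩, by rw [e1]; exact hFy, by rw [e2]; exact hGy⟩
  push_neg at hGx hFy
  have ht0 : 0 < t := by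
    rcases eq_or_lt_of_le htIcc.1 with h | h
    · exfalso; rw [← h] at hx; simp at hx; linarith
    · exact h
  have ht1 : t < 1 := by
    rcases lt_or_eq_of_le htIcc.2 with h | h
    · exact h
    · exfalso; rw [h] at hy; simp at hy; linarith
  have hFxneg : F x < 0 := by
    rcases lt_or_eq_of_le hFx with h | h
    · exact h
    · exfalso
      rw [h] at hx
      nlinarith [mul_pos (show (0:ℝ) < 1 - t by linarith) hGx]
  have hGyneg : G y < 0 := by
    rcases lt_or_eq_of_le hGy with h | h
    · exact h
    · exfalso
      rw [h] at hy
      nlinarith [mul_pos ht0 hFy]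
  have h1 : (1 - t) * G x ≤ t * (-F x) := by linarith
  have h2 : t * F y ≤ (1 - t) * (-G y) := by linarith
  have h3 : ((1 - t) * G x) * (t * F y) ≤ (t * (-F x)) * ((1 - t) * (-G y)) :=
    mul_le_mul h1 h2 (mul_nonneg ht0.le hFy.le)
      (mul_nonneg ht0.le (neg_nonneg.mpr hFxneg.le))
  have hkey : F y * G x ≤ F x * G y := by
    have h4 : t * (1 - t) * (F y * G x) ≤ t * (1 - t) * (F x * G y) := by
      nlinarith [h3]
    exact le_of_mul_le_mul_left h4 (mul_pos ht0 (by linarith))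
  have hD : 0 < F y - F x := by linarith
  refine ⟨x, y, F y / (F y - F x), ⟨div_pos hFy hD, (div_lt_one hD).mpr (by linarith)⟩, ?_, ?_⟩
  · have e : F y / (F y - F x) * F x + (1 - F y / (F y - F x)) * F y = 0 := by
      field_simp
      ring
    exact e.le
  · have e : F y / (F y - F x) * G x + (1 - F y / (F y - F x)) * G y
        = (F y * G x - F x * G y) / (F y - F x) := by
      field_simp
      ring
    rw [e, div_nonpos_iff]
    exact Or.inr ⟨by linarith, hD.le⟩
end

section
/- Let d ≥ 1, let Λ be a nonempty compact subset of ℝ^d, let f, g : Λ → ℝ be continuous, and let π be a Borel probability measure on Λ whose support is all of Λ. Assume ∫_Λ f dπ = ∫_Λ g dπ = 0 and that there is no λ ∈ Λ with both f(λ) ≤ 0 and g(λ) ≤ 0. Then there exist λ, λ' ∈ Λ with f(λ) ≤ 0, g(λ') ≤ 0, and f(λ)·g(λ') − f(λ')·g(λ) ≥ 0. -/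
open MeasureTheory

/-- With centred integrals and no common nonpositive point, there exist
`λ` with `f λ ≤ 0` and `λ'` with `g λ' ≤ 0` such that `f λ * g λ' - f λ' * g λ ≥ 0`. -/
theorem exists_pair_det_nonneg
    (d : ℕ) (hd : 1 ≤ d) (Λ : Set (EuclideanSpace ℝ (Fin d)))
    (hΛne : Λ.Nonempty) (hΛc : IsCompact Λ)
    (f g : Λ → ℝ) (hf : Continuous f) (hg : Continuous g)
    (π : Measure Λ) [IsProbabilityMeasure π]
    (hsupp : ∀ U : Set Λ, IsOpen U → U.Nonempty → 0 < π U)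
    (hf0 : ∫ x, f x ∂π = 0) (hg0 : ∫ x, g x ∂π = 0)
    (hno : ¬ ∃ l : Λ, f l ≤ 0 ∧ g l ≤ 0) :
    ∃ (l l' : Λ), f l ≤ 0 ∧ g l' ≤ 0 ∧ f l * g l' - f l' * g l ≥ 0 := by
  have hcs : CompactSpace Λ := isCompact_iff_compactSpace.mp hΛc
  have hne : Nonempty Λ := hΛne.to_subtype
  push_neg at hno
  -- key lemma: continuous nonneg with zero integral vanishes
  have key : ∀ h : Λ → ℝ, Continuous h → (∀ x, 0 ≤ h x) → ∫ x, h x ∂π = 0 →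
      ∀ x, h x = 0 := by
    intro h hc h0 hint
    have hi : Integrable h π :=
      hc.integrable_of_hasCompactSupport (isClosed_tsupport h).isCompact
    have hae : h =ᵐ[π] 0 := (integral_eq_zero_iff_of_nonneg h0 hi).mp hint
    by_contra hx
    push_neg at hx
    obtain ⟨x, hx⟩ := hx
    have hopen : IsOpen {y : Λ | h y ≠ 0} :=
      IsOpen.preimage hc isOpen_ne
    have hpos := hsupp _ hopen ⟨x, hx⟩
    have hz : π {y : Λ | h y ≠ 0} = 0 := by
      have := hae
      rw [Filter.EventuallyEq, ae_iff] at this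
      simpa using this
    rw [hz] at hpos
    exact lt_irrefl 0 hpos
  have hfi : Integrable f π :=
    hf.integrable_of_hasCompactSupport (isClosed_tsupport f).isCompact
  have hgi : Integrable g π :=
    hg.integrable_of_hasCompactSupport (isClosed_tsupport g).isCompact
  -- A nonempty
  have hAne : ∃ x : Λ, f x ≤ 0 := by
    by_contra hA
    push_neg at hA
    have := key f hf (fun x => (hA x).le) hf0
    obtain ⟨x⟩ := hne
    exact absurd (this x) (hA x).ne'
  have hBne : ∃ y : Λ, g y ≤ 0 := by
    by_contra hB
    push_neg at hB
    have := key g hg (fun x => (hB x).le) hg0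
    obtain ⟨x⟩ := hne
    exact absurd (this x) (hB x).ne'
  by_contra hcon
  push_neg at hcon
  -- minimize f/g on A
  have hAcomp : IsCompact {x : Λ | f x ≤ 0} :=
    (isClosed_le hf continuous_const).isCompact
  have hAne' : ({x : Λ | f x ≤ 0} : Set Λ).Nonempty := hAne
  have hcont : ContinuousOn (fun x : Λ => f x / g x) {x : Λ | f x ≤ 0} :=
    hf.continuousOn.div hg.continuousOn (fun x hx => (hno x hx).ne')
  obtain ⟨x0, hx0A, hx0min⟩ := hAcomp.exists_isMinOn hAne' hcont
  have hx0A' : f x0 ≤ 0 := hx0A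
  have g0pos : 0 < g x0 := hno x0 hx0A'
  set a : ℝ := f x0 / g x0 with ha_def
  have ha : f x0 = a * g x0 := by
    rw [ha_def]; exact (div_mul_cancel₀ _ g0pos.ne').symm
  have ha0 : a ≤ 0 := div_nonpos_of_nonpos_of_nonneg hx0A' g0pos.le
  -- h = f - a*g is nonneg everywhere
  have hpos : ∀ x : Λ, 0 ≤ f x - a * g x := by
    intro x
    by_cases hfx : f x ≤ 0
    · have gxpos : 0 < g x := hno x hfx
      have hmin : a ≤ f x / g x := hx0min hfx
      have := (le_div_iff₀ gxpos).mp hmin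
      linarith
    · push_neg at hfx
      by_cases hgx : 0 ≤ g x
      · nlinarith [mul_nonneg (neg_nonneg.mpr ha0) hgx]
      · push_neg at hgx
        have hdet := hcon x0 x hx0A' hgx.le
        rw [ha] at hdet
        nlinarith [hdet, g0pos]
  have hint0 : ∫ x, (f x - a * g x) ∂π = 0 := by
    rw [integral_sub hfi (hgi.const_mul a), integral_const_mul, hf0, hg0]
    ring
  have feq : ∀ x : Λ, f x = a * g x := by
    intro x
    have := key (fun x => f x - a * g x) (hf.sub (continuous_const.mul hg))
      hpos hint0 x
    linarith [this]
  obtain ⟨y0, hy0⟩ := hBne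
  obtain ⟨x1, hx1⟩ := hAne
  have hdet := hcon x1 y0 hx1 hy0
  rw [feq x1, feq y0] at hdet
  nlinarith [hdet]
end

section
/- Fix d ≥ 1, x_max > 0, and loss parameters l01, l11 ∈ ℝ with 0 ≤ l11 < l01. Set c = l01 − l11, l_max = max(1, c), and let Θ = {θ ∈ ℝ^d : ‖θ‖₁ ≤ 1} be the closed ℓ1 unit ball. Then for every ε with 0 < ε < min(1, c) and ε ≤ 3·l_max·x_max, there exists a finite partition {Θ_1, …, Θ_K} of Θ with K ≤ (3·l_max·x_max/ε)^d such that for every k ∈ {1,…,K}, all θ, θ' ∈ Θ_k and every x ∈ ℝ^d with ‖x‖_∞ ≤ x_max, the distortion rate satisfies d(θ, θ'; x) ≤ ε. -/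
/-- The logistic (sigmoid) function `σ(z) = 1/(1+e^{-z})`. -/
noncomputable def logistic (z : ℝ) : ℝ := 1 / (1 + Real.exp (-z))

/-- Expected loss of label `a ∈ {0,1}` under parameter `θ` and context `x`:
`μ(0,θ;x) = l01·σ(xᵀθ)` and `μ(1,θ;x) = 1 + (l11−1)·σ(xᵀθ)`. -/
noncomputable def expLoss {d : ℕ} (l01 l11 : ℝ) (a : Fin 2) (θ x : Fin d → ℝ) : ℝ :=
  if a = 0 then l01 * logistic (∑ i, x i * θ i)
  else 1 + (l11 - 1) * logistic (∑ i, x i * θ i)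

/-- The optimal action: `1` if `μ(1,θ;x) ≤ μ(0,θ;x)`, else `0`. -/
noncomputable def optAct {d : ℕ} (l01 l11 : ℝ) (θ x : Fin d → ℝ) : Fin 2 :=
  if expLoss l01 l11 1 θ x ≤ expLoss l01 l11 0 θ x then 1 else 0

/-- The distortion rate `d(θ,θ';x) = μ(α(θ;x),θ';x) − μ(α(θ';x),θ';x)`. -/
noncomputable def distRate {d : ℕ} (l01 l11 : ℝ) (θ θ' x : Fin d → ℝ) : ℝ :=
  expLoss l01 l11 (optAct l01 l11 θ x) θ' x - expLoss l01 l11 (optAct l01 l11 θ' x) θ' x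

open MeasureTheory Pointwise ENNReal

lemma hasDerivAt_logistic (z : ℝ) :
    HasDerivAt logistic (Real.exp (-z) / (1 + Real.exp (-z))^2) z := by
  have h1 : HasDerivAt (fun z : ℝ => 1 + Real.exp (-z)) (-Real.exp (-z)) z := by
    simpa using ((Real.hasDerivAt_exp (-z)).comp z (hasDerivAt_neg z)).const_add 1
  have h2 : (1 + Real.exp (-z)) ≠ 0 := by positivity
  have h3 := h1.inv h2
  have he : logistic = fun z : ℝ => (1 + Real.exp (-z))⁻¹ := by
    funext w; simp [logistic, one_div]
  rw [he]
  convert h3 using 1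
  exacts [rfl, rfl, rfl, by ring]

lemma logistic_lipschitz : LipschitzWith (1/4 : NNReal) logistic := by
  apply lipschitzWith_of_nnnorm_deriv_le (fun z => (hasDerivAt_logistic z).differentiableAt)
  intro z
  rw [← NNReal.coe_le_coe, coe_nnnorm, Real.norm_eq_abs, (hasDerivAt_logistic z).deriv]
  have ht : 0 < Real.exp (-z) := Real.exp_pos _
  rw [abs_of_nonneg (by positivity)]
  push_cast
  rw [div_le_div_iff₀ (by positivity) (by norm_num)]
  nlinarith [sq_nonneg (1 - Real.exp (-z))]

lemma abs_logistic_sub (a b : ℝ) : |logistic a - logistic b| ≤ |a - b| / 4 := by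
  have := logistic_lipschitz.dist_le_mul a b
  rw [Real.dist_eq, Real.dist_eq] at this
  push_cast at this
  linarith
lemma distRate_le_abs {d : ℕ} (l01 l11 : ℝ) (hlt : l11 < l01) (θ θ' x : Fin d → ℝ) :
    distRate l01 l11 θ θ' x ≤
      (l01 - l11 + 1) * |logistic (∑ i, x i * θ i) - logistic (∑ i, x i * θ' i)| := by
  have hc1 : (0:ℝ) ≤ l01 - l11 + 1 := by linarith
  have habs : (l01 - l11 + 1) * (logistic (∑ i, x i * θ i) - logistic (∑ i, x i * θ' i)) ≤
      (l01 - l11 + 1) * |logistic (∑ i, x i * θ i) - logistic (∑ i, x i * θ' i)| :=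
    mul_le_mul_of_nonneg_left (le_abs_self _) hc1
  have habs' : (l01 - l11 + 1) * (logistic (∑ i, x i * θ' i) - logistic (∑ i, x i * θ i)) ≤
      (l01 - l11 + 1) * |logistic (∑ i, x i * θ i) - logistic (∑ i, x i * θ' i)| := by
    rw [abs_sub_comm]
    exact mul_le_mul_of_nonneg_left (le_abs_self _) hc1
  unfold distRate optAct
  by_cases h : expLoss l01 l11 1 θ x ≤ expLoss l01 l11 0 θ x <;>
    by_cases h' : expLoss l01 l11 1 θ' x ≤ expLoss l01 l11 0 θ' x <;>
    simp only [h, h', if_true, if_false, if_pos, if_neg, not_false_iff] <;>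
    unfold expLoss at h h' ⊢ <;>
    simp only [show (1 : Fin 2) ≠ 0 by decide, if_false, if_true, ite_true, ite_false,
      reduceIte] at h h' ⊢
  · linarith
  · push_neg at h'
    nlinarith [habs']
  · push_neg at h
    nlinarith [habs]
  · linarith
lemma l1ball_eq (d : ℕ) (c : Fin d → ℝ) (ρ : ℝ) (hρ : 0 < ρ) :
    {θ : Fin d → ℝ | ∑ i, |θ i - c i| ≤ ρ} =
      c +ᵥ (ρ • {θ : Fin d → ℝ | ∑ i, |θ i| ≤ 1}) := by
  ext θ
  rw [Set.mem_vadd_set_iff_neg_vadd_mem, Set.mem_smul_set_iff_inv_smul_mem₀ (ne_of_gt hρ)]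
  simp only [Set.mem_setOf_eq, Pi.smul_apply, vadd_eq_add, Pi.add_apply, Pi.neg_apply,
    smul_eq_mul, neg_add_eq_sub, Pi.sub_apply, abs_mul, abs_inv, abs_of_pos hρ]
  rw [← Finset.mul_sum, inv_mul_le_iff₀ hρ, mul_one]

lemma volume_l1ball (d : ℕ) (c : Fin d → ℝ) (ρ : ℝ) (hρ : 0 < ρ) :
    volume {θ : Fin d → ℝ | ∑ i, |θ i - c i| ≤ ρ}
      = ENNReal.ofReal (ρ ^ d) * volume {θ : Fin d → ℝ | ∑ i, |θ i| ≤ 1} := by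
  rw [l1ball_eq d c ρ hρ, measure_vadd, Measure.addHaar_smul]
  congr 2
  rw [abs_of_pos (pow_pos hρ _)]
  congr 1
  simp [Module.finrank_pi]

lemma measurable_l1ball (d : ℕ) (c : Fin d → ℝ) (ρ : ℝ) :
    MeasurableSet {θ : Fin d → ℝ | ∑ i, |θ i - c i| ≤ ρ} := by
  have hcont : Continuous fun θ : Fin d → ℝ => ∑ i, |θ i - c i| :=
    continuous_finset_sum _ fun i _ => ((continuous_apply i).sub continuous_const).abs
  exact (isClosed_le hcont continuous_const).measurableSet

lemma volume_l1unit_pos (d : ℕ) (hd : 1 ≤ d) :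
    0 < volume {θ : Fin d → ℝ | ∑ i, |θ i| ≤ 1} := by
  have hsub : Metric.ball (0 : Fin d → ℝ) (1 / d) ⊆ {θ : Fin d → ℝ | ∑ i, |θ i| ≤ 1} := by
    intro θ hθ
    rw [Metric.mem_ball, dist_zero_right] at hθ
    have h1 : ∀ i, |θ i| ≤ ‖θ‖ := fun i => by
      simpa using norm_le_pi_norm θ i
    calc ∑ i, |θ i| ≤ ∑ _i : Fin d, ‖θ‖ := Finset.sum_le_sum fun i _ => h1 i
      _ = d * ‖θ‖ := by simp [mul_comm]
      _ ≤ d * (1 / d) := by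
          apply mul_le_mul_of_nonneg_left (le_of_lt hθ) (by positivity)
      _ ≤ 1 := by
          rw [mul_one_div]
          apply div_le_one_of_le₀ le_rfl (by positivity)
  calc 0 < volume (Metric.ball (0 : Fin d → ℝ) (1 / d)) := by
        apply Metric.measure_ball_pos
        have : (0:ℝ) < d := by exact_mod_cast hd
        positivity
    _ ≤ _ := measure_mono hsub

lemma volume_l1unit_lt_top (d : ℕ) :
    volume {θ : Fin d → ℝ | ∑ i, |θ i| ≤ 1} < ⊤ := by
  have hsub : {θ : Fin d → ℝ | ∑ i, |θ i| ≤ 1} ⊆ Metric.closedBall 0 1 := by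
    intro θ hθ
    rw [Metric.mem_closedBall, dist_zero_right]
    rw [pi_norm_le_iff_of_nonneg zero_le_one]
    intro i
    calc ‖θ i‖ = |θ i| := rfl
      _ ≤ ∑ j, |θ j| := Finset.single_le_sum (f := fun j => |θ j|) (fun j _ => abs_nonneg _) (Finset.mem_univ i)
      _ ≤ 1 := hθ
  exact lt_of_le_of_lt (measure_mono hsub) measure_closedBall_lt_top

lemma packing_card_le (d : ℕ) (hd : 1 ≤ d) (r : ℝ) (hr : 0 < r)
    (S : Finset (Fin d → ℝ))
    (hS1 : ∀ c ∈ S, ∑ i, |c i| ≤ 1)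
    (hS2 : ∀ c ∈ S, ∀ c' ∈ S, c ≠ c' → r < ∑ i, |c i - c' i|) :
    (S.card : ℝ) ≤ ((2 + r) / r) ^ d := by
  set V := volume {θ : Fin d → ℝ | ∑ i, |θ i| ≤ 1} with hVdef
  have hV0 : V ≠ 0 := (volume_l1unit_pos d hd).ne'
  have hVt : V ≠ ⊤ := (volume_l1unit_lt_top d).ne
  have hdisj : (S : Set (Fin d → ℝ)).PairwiseDisjoint
      (fun c => {θ : Fin d → ℝ | ∑ i, |θ i - c i| ≤ r / 2}) := by
    intro c hc c' hc' hne
    simp only [Function.onFun]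
    rw [Set.disjoint_left]
    intro θ hθ hθ'
    simp only [Set.mem_setOf_eq] at hθ hθ'
    have htri : ∑ i, |c i - c' i| ≤ (∑ i, |θ i - c i|) + ∑ i, |θ i - c' i| := by
      rw [← Finset.sum_add_distrib]
      apply Finset.sum_le_sum
      intro i _
      calc |c i - c' i| ≤ |c i - θ i| + |θ i - c' i| := abs_sub_le _ _ _
        _ = |θ i - c i| + |θ i - c' i| := by rw [abs_sub_comm]
    have := hS2 c hc c' hc' hne
    linarith
  have hkey : (S.card : ℝ≥0∞) * ENNReal.ofReal ((r / 2) ^ d) * V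
      ≤ ENNReal.ofReal ((1 + r / 2) ^ d) * V := by
    calc (S.card : ℝ≥0∞) * ENNReal.ofReal ((r / 2) ^ d) * V
        = ∑ c ∈ S, volume {θ : Fin d → ℝ | ∑ i, |θ i - c i| ≤ r / 2} := by
          rw [Finset.sum_congr rfl fun c _ => volume_l1ball d c (r / 2) (by linarith),
            Finset.sum_const, nsmul_eq_mul, mul_assoc]
      _ = volume (⋃ c ∈ S, {θ : Fin d → ℝ | ∑ i, |θ i - c i| ≤ r / 2}) :=
          (measure_biUnion_finset hdisj fun c _ => measurable_l1ball d c (r / 2)).symm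
      _ ≤ volume {θ : Fin d → ℝ | ∑ i, |θ i| ≤ 1 + r / 2} := by
          apply measure_mono
          intro θ hθ
          simp only [Set.mem_iUnion, Set.mem_setOf_eq] at hθ ⊢
          obtain ⟨c, hc, hθc⟩ := hθ
          have htri : ∑ i, |θ i| ≤ (∑ i, |θ i - c i|) + ∑ i, |c i| := by
            rw [← Finset.sum_add_distrib]
            apply Finset.sum_le_sum
            intro i _
            calc |θ i| = |(θ i - c i) + c i| := by ring_nf
              _ ≤ |θ i - c i| + |c i| := abs_add_le _ _
          have := hS1 c hc
          linarith
      _ = ENNReal.ofReal ((1 + r / 2) ^ d) * V := by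
          have := volume_l1ball d 0 (1 + r / 2) (by linarith)
          simpa using this
  have hkey2 : (S.card : ℝ≥0∞) * ENNReal.ofReal ((r / 2) ^ d)
      ≤ ENNReal.ofReal ((1 + r / 2) ^ d) := (ENNReal.mul_le_mul_iff_left hV0 hVt).mp hkey
  have hkey3 : (S.card : ℝ) * (r / 2) ^ d ≤ (1 + r / 2) ^ d := by
    rw [← ENNReal.ofReal_natCast, ← ENNReal.ofReal_mul (by positivity)] at hkey2
    exact (ENNReal.ofReal_le_ofReal_iff (by positivity)).mp hkey2
  have h2 : (0:ℝ) < (r / 2) ^ d := by positivity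
  have heq : ((1 + r / 2) / (r / 2) : ℝ) = (2 + r) / r := by
    rw [div_eq_div_iff (by linarith) hr.ne']; ring
  calc (S.card : ℝ) ≤ (1 + r / 2) ^ d / (r / 2) ^ d := (le_div_iff₀ h2).mpr hkey3
    _ = ((1 + r / 2) / (r / 2)) ^ d := (div_pow _ _ _).symm
    _ = ((2 + r) / r) ^ d := by rw [heq]

lemma exists_net (d : ℕ) (hd : 1 ≤ d) (r : ℝ) (hr : 0 < r) :
    ∃ S : Finset (Fin d → ℝ),
      (S.card : ℝ) ≤ ((2 + r) / r) ^ d ∧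
      ∀ θ : Fin d → ℝ, ∑ i, |θ i| ≤ 1 → ∃ c ∈ S, ∑ i, |θ i - c i| ≤ r := by
  classical
  set good : Finset (Fin d → ℝ) → Prop := fun S =>
    (∀ c ∈ S, ∑ i, |c i| ≤ 1) ∧
    ∀ c ∈ S, ∀ c' ∈ S, c ≠ c' → r < ∑ i, |c i - c' i| with hgood
  have hbR : ∀ S, good S → (S.card : ℝ) ≤ ((2 + r) / r) ^ d := fun S hS =>
    packing_card_le d hd r hr S hS.1 hS.2
  set NB : ℕ := Nat.ceil (((2 + r) / r) ^ d) with hNB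
  set P : ℕ → Prop := fun n => ∃ S, good S ∧ S.card = n with hP
  have hb : ∀ n, P n → n ≤ NB := by
    rintro n ⟨S, hS, rfl⟩
    exact_mod_cast le_trans (hbR S hS) (Nat.le_ceil _)
  have hP0 : P 0 := ⟨∅, ⟨fun c hc => absurd hc (Finset.notMem_empty c),
    fun c hc => absurd hc (Finset.notMem_empty c)⟩, Finset.card_empty⟩
  set N : ℕ := Nat.findGreatest P NB with hN
  have hPN : P N := Nat.findGreatest_spec (Nat.zero_le NB) hP0
  obtain ⟨S, hSgood, hScard⟩ := hPN
  refine ⟨S, hScard ▸ hbR S hSgood, ?_⟩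
  intro θ hθ
  by_contra hcon
  push_neg at hcon
  have hθS : θ ∉ S := by
    intro hmem
    have := hcon θ hmem
    simp at this
    linarith
  have hgood' : good (insert θ S) := by
    constructor
    · intro c hc
      rcases Finset.mem_insert.mp hc with h | h
      · exact h ▸ hθ
      · exact hSgood.1 c h
    · intro c hc c' hc' hne
      rcases Finset.mem_insert.mp hc with h | h <;>
        rcases Finset.mem_insert.mp hc' with h' | h'
      · exact absurd (h.trans h'.symm) hne
      · exact h ▸ hcon c' h'
      · rw [h']
        calc r < ∑ i, |θ i - c i| := hcon c h
          _ = ∑ i, |c i - θ i| := Finset.sum_congr rfl fun i _ => abs_sub_comm _ _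
      · exact hSgood.2 c h c' h' hne
  have hcard' : (insert θ S).card = N + 1 := by
    rw [Finset.card_insert_of_notMem hθS, hScard]
  have : N + 1 ≤ N :=
    Nat.le_findGreatest (hb (N + 1) ⟨_, hgood', hcard'⟩) ⟨_, hgood', hcard'⟩
  omega

lemma distRate_le_main {d : ℕ} (l01 l11 xmax : ℝ) (hlt : l11 < l01) (hxm : 0 ≤ xmax)
    (θ θ' x : Fin d → ℝ) (hx : ∀ i, |x i| ≤ xmax) :
    distRate l01 l11 θ θ' x ≤ (l01 - l11 + 1) / 4 * (xmax * ∑ i, |θ i - θ' i|) := by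
  have h1 := distRate_le_abs l01 l11 hlt θ θ' x
  have h2 := abs_logistic_sub (∑ i, x i * θ i) (∑ i, x i * θ' i)
  have h3 : |(∑ i, x i * θ i) - ∑ i, x i * θ' i| ≤ xmax * ∑ i, |θ i - θ' i| := by
    rw [← Finset.sum_sub_distrib]
    calc |∑ i, (x i * θ i - x i * θ' i)| ≤ ∑ i, |x i * θ i - x i * θ' i| :=
        Finset.abs_sum_le_sum_abs _ _
      _ ≤ ∑ i, xmax * |θ i - θ' i| := by
          apply Finset.sum_le_sum
          intro i _
          rw [← mul_sub, abs_mul]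
          exact mul_le_mul_of_nonneg_right (hx i) (abs_nonneg _)
      _ = xmax * ∑ i, |θ i - θ' i| := (Finset.mul_sum _ _ _).symm
  have hc1 : (0:ℝ) ≤ l01 - l11 + 1 := by linarith
  have h4 := mul_le_mul_of_nonneg_left h2 hc1
  have h5 := mul_le_mul_of_nonneg_left h3 (show (0:ℝ) ≤ (l01 - l11 + 1) / 4 by linarith)
  calc distRate l01 l11 θ θ' x
      ≤ (l01 - l11 + 1) * |logistic (∑ i, x i * θ i) - logistic (∑ i, x i * θ' i)| := h1
    _ ≤ (l01 - l11 + 1) * (|(∑ i, x i * θ i) - ∑ i, x i * θ' i| / 4) := h4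
    _ = (l01 - l11 + 1) / 4 * |(∑ i, x i * θ i) - ∑ i, x i * θ' i| := by ring
    _ ≤ (l01 - l11 + 1) / 4 * (xmax * ∑ i, |θ i - θ' i|) := h5

/-- There is a finite partition of the ℓ1 unit ball `Θ ⊆ ℝ^d` of size at most
`(3·l_max·x_max/ε)^d` on whose cells the distortion rate is at most `ε`, uniformly over
contexts with `‖x‖_∞ ≤ x_max`. -/
theorem exists_partition_distRate_le
    (d : ℕ) (hd : 1 ≤ d) (xmax : ℝ) (hx : 0 < xmax)
    (l01 l11 : ℝ) (h11 : 0 ≤ l11) (hlt : l11 < l01)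
    (ε : ℝ) (hε0 : 0 < ε) (hε1 : ε < min 1 (l01 - l11))
    (hε2 : ε ≤ 3 * max 1 (l01 - l11) * xmax) :
    ∃ (K : ℕ) (P : Fin K → Set (Fin d → ℝ)),
      (K : ℝ) ≤ (3 * max 1 (l01 - l11) * xmax / ε) ^ d ∧
      (⋃ k, P k) = {θ : Fin d → ℝ | ∑ i, |θ i| ≤ 1} ∧
      (∀ k k', k ≠ k' → Disjoint (P k) (P k')) ∧
      (∀ k, ∀ θ ∈ P k, ∀ θ' ∈ P k, ∀ x : Fin d → ℝ,
        (∀ i, |x i| ≤ xmax) → distRate l01 l11 θ θ' x ≤ ε) := by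
  classical
  have hc0 : 0 < l01 - l11 := sub_pos.mpr hlt
  set L : ℝ := max 1 (l01 - l11) with hLdef
  have hL1 : (1:ℝ) ≤ L := le_max_left _ _
  have hLc : l01 - l11 ≤ L := le_max_right _ _
  have hL0 : (0:ℝ) < L := lt_of_lt_of_le one_pos hL1
  have hLx : (0:ℝ) < L * xmax := mul_pos hL0 hx
  set r : ℝ := ε / (L * xmax) with hrdef
  have hr0 : 0 < r := div_pos hε0 hLx
  have hr3 : r ≤ 3 := by
    rw [hrdef, div_le_iff₀ hLx]
    calc ε ≤ 3 * L * xmax := hε2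
      _ = 3 * (L * xmax) := by ring
  have h3r : 3 * L * xmax / ε = 3 / r := by
    rw [hrdef]
    field_simp
  have hrε : L * xmax * r = ε := by
    rw [hrdef]
    field_simp
  have hEst : ∀ θ θ' x_ : Fin d → ℝ, (∀ i, |x_ i| ≤ xmax) →
      (∑ i, |θ i - θ' i|) ≤ 2 * r → distRate l01 l11 θ θ' x_ ≤ ε := by
    intro θ θ' x_ hx_ hsum
    have h := distRate_le_main l01 l11 xmax hlt hx.le θ θ' x_ hx_
    have hc4 : (0:ℝ) ≤ (l01 - l11 + 1) / 4 := by linarith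
    have e1 : (l01 - l11 + 1) / 4 * (xmax * ∑ i, |θ i - θ' i|)
        ≤ (l01 - l11 + 1) / 4 * (xmax * (2 * r)) :=
      mul_le_mul_of_nonneg_left (mul_le_mul_of_nonneg_left hsum hx.le) hc4
    have e2 : (l01 - l11 + 1) / 4 * (xmax * (2 * r)) ≤ L * xmax * r := by
      have heq : (l01 - l11 + 1) / 4 * (xmax * (2 * r)) = (l01 - l11 + 1) / 2 * (xmax * r) := by
        ring
      have hle : (l01 - l11 + 1) / 2 ≤ L := by linarith
      rw [heq, ← mul_assoc]
      exact mul_le_mul_of_nonneg_right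
        (mul_le_mul_of_nonneg_right hle hx.le) hr0.le |>.trans
        (le_of_eq (by ring))
    linarith [hrε ▸ (h.trans (e1.trans e2))]
  rcases le_or_gt 1 r with hr1 | hr1
  · -- trivial partition with one cell
    refine ⟨1, fun _ => {θ : Fin d → ℝ | ∑ i, |θ i| ≤ 1}, ?_, ?_, ?_, ?_⟩
    · rw [h3r]
      have h31 : (1:ℝ) ≤ 3 / r := by
        rw [le_div_iff₀ hr0]
        linarith
      calc ((1:ℕ) : ℝ) = 1 := by norm_num
        _ ≤ (3 / r) ^ d := one_le_pow₀ h31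
    · exact Set.iUnion_const _
    · intro k k' hkk
      exact absurd (Subsingleton.elim k k') hkk
    · intro k θ hθ θ' hθ' x_ hx_
      apply hEst θ θ' x_ hx_
      have htri : ∑ i, |θ i - θ' i| ≤ (∑ i, |θ i|) + ∑ i, |θ' i| := by
        rw [← Finset.sum_add_distrib]
        exact Finset.sum_le_sum fun i _ => abs_sub _ _
      simp only [Set.mem_setOf_eq] at hθ hθ'
      linarith
  · obtain ⟨S, hcard, hnet⟩ := exists_net d hd r hr0
    set cc : Fin S.card → (Fin d → ℝ) := fun k => (S.equivFin.symm k : Fin d → ℝ) with hcc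
    have hccS : ∀ k, cc k ∈ S := fun k => (S.equivFin.symm k).2
    refine ⟨S.card, fun k => {θ : Fin d → ℝ | (∑ i, |θ i| ≤ 1) ∧
      (∑ i, |θ i - cc k i| ≤ r) ∧ ∀ j : Fin S.card, j < k → ¬ (∑ i, |θ i - cc j i| ≤ r)},
      ?_, ?_, ?_, ?_⟩
    · rw [h3r]
      refine hcard.trans (pow_le_pow_left₀ (by positivity) ?_ d)
      rw [div_le_div_iff₀ hr0 hr0]
      nlinarith [hr0]
    · ext θ
      simp only [Set.mem_iUnion, Set.mem_setOf_eq]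
      constructor
      · rintro ⟨k, h1, -, -⟩
        exact h1
      · intro hθ
        obtain ⟨c₀, hc₀S, hc₀⟩ := hnet θ hθ
        set T : Finset (Fin S.card) :=
          Finset.univ.filter (fun k => ∑ i, |θ i - cc k i| ≤ r) with hT
        have hTne : T.Nonempty := by
          refine ⟨S.equivFin ⟨c₀, hc₀S⟩, Finset.mem_filter.mpr ⟨Finset.mem_univ _, ?_⟩⟩
          have heqc : cc (S.equivFin ⟨c₀, hc₀S⟩) = c₀ := by
            rw [hcc]
            simp
          rw [heqc]
          exact hc₀
        refine ⟨T.min' hTne, hθ, ?_, ?_⟩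
        · exact (Finset.mem_filter.mp (T.min'_mem hTne)).2
        · intro j hj hcond
          have hjT : j ∈ T := Finset.mem_filter.mpr ⟨Finset.mem_univ _, hcond⟩
          exact absurd (T.min'_le j hjT) (not_le.mpr hj)
    · intro k k' hkk
      rw [Set.disjoint_left]
      rintro θ ⟨-, hk2, hk3⟩ ⟨-, hk2', hk3'⟩
      rcases lt_trichotomy k k' with h | h | h
      · exact hk3' k h hk2
      · exact hkk h
      · exact hk3 k' h hk2'
    · rintro k θ ⟨-, hθk, -⟩ θ' ⟨-, hθ'k, -⟩ x_ hx_
      apply hEst θ θ' x_ hx_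
      have htri : ∑ i, |θ i - θ' i| ≤ (∑ i, |θ i - cc k i|) + ∑ i, |θ' i - cc k i| := by
        rw [← Finset.sum_add_distrib]
        apply Finset.sum_le_sum
        intro i _
        calc |θ i - θ' i| ≤ |θ i - cc k i| + |cc k i - θ' i| := abs_sub_le _ _ _
          _ = |θ i - cc k i| + |θ' i - cc k i| := by rw [abs_sub_comm (cc k i)]
      linarith
end

section
/- Fix loss parameters l01, l11 ∈ ℝ with 0 ≤ l11 < l01, set c = l01 − l11, and let ε satisfy 0 < ε < min(1, c). For all θ, θ', x ∈ ℝ^d, if |xᵀθ − xᵀθ'| ≤ log(1 + ε/min(1,c)) − log(1 − ε/max(1,c)), then d(θ, θ'; x) ≤ ε. -/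
set_option maxHeartbeats 4000000 in
/-- If `|xᵀθ − xᵀθ'|` is at most
`log(1 + ε/min(1,c)) − log(1 − ε/max(1,c))` with `c = l01 − l11`, then `d(θ,θ';x) ≤ ε`. -/
theorem distRate_le_of_dot_close
    (d : ℕ) (l01 l11 : ℝ) (h11 : 0 ≤ l11) (hlt : l11 < l01)
    (ε : ℝ) (hε0 : 0 < ε) (hε1 : ε < min 1 (l01 - l11))
    (θ θ' x : Fin d → ℝ)
    (h : |(∑ i, x i * θ i) - ∑ i, x i * θ' i| ≤
      Real.log (1 + ε / min 1 (l01 - l11)) -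
        Real.log (1 - ε / max 1 (l01 - l11))) :
    distRate l01 l11 θ θ' x ≤ ε := by
  have hc0 : (0:ℝ) < l01 - l11 := sub_pos.mpr hlt
  set c := l01 - l11 with hcdef
  set z := ∑ i, x i * θ i with hz
  set z' := ∑ i, x i * θ' i with hz'
  set u := Real.exp (-z) with hu_def
  set u' := Real.exp (-z') with hu'_def
  have hu : 0 < u := Real.exp_pos _
  have hu' : 0 < u' := Real.exp_pos _
  have hε1' : ε < 1 := lt_of_lt_of_le hε1 (min_le_left _ _)
  have hεc : ε < c := lt_of_lt_of_le hε1 (min_le_right _ _)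
  set m := min 1 c with hm_def
  set M := max 1 c with hM_def
  have hm0 : 0 < m := lt_min one_pos hc0
  have hM1 : (1:ℝ) ≤ M := le_max_left _ _
  have hεm : ε < m := hε1
  have hεM : ε < M := lt_of_lt_of_le hε1' hM1
  have hM0 : 0 < M := by linarith
  set R := ((m+ε)*M)/((M-ε)*m) with hR_def
  have hden : 0 < (M-ε)*m := mul_pos (by linarith) hm0
  have hnum : 0 < (m+ε)*M := mul_pos (by linarith) hM0
  have hR0 : 0 < R := div_pos hnum hden
  have hA0 : (0:ℝ) < 1 + ε/m := by positivity
  have hB0 : (0:ℝ) < 1 - ε/M := by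
    rw [sub_pos, div_lt_one hM0]; exact hεM
  clear_value z z' u u' c m M R
  have hlogeq : Real.log (1 + ε/m) - Real.log (1 - ε/M) = Real.log R := by
    rw [hR_def, ← Real.log_div (ne_of_gt hA0) (ne_of_gt hB0)]
    congr 1
    rw [div_eq_div_iff (ne_of_gt hB0) (ne_of_gt hden)]
    field_simp
  rw [hlogeq] at h
  have habs := abs_le.mp h
  have hexp1 : Real.exp (z - z') ≤ R := by
    rw [← Real.exp_log hR0]
    exact Real.exp_le_exp.mpr habs.2
  have hexp2 : Real.exp (z' - z) ≤ R := by
    rw [← Real.exp_log hR0]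
    exact Real.exp_le_exp.mpr (by linarith [habs.1])
  have hup : u' * ((M-ε)*m) ≤ u * ((m+ε)*M) := by
    have e1 : u' = u * Real.exp (z - z') := by
      rw [hu_def, hu'_def, ← Real.exp_add]; congr 1; ring
    calc u' * ((M-ε)*m) = u * Real.exp (z-z') * ((M-ε)*m) := by rw [← e1]
      _ ≤ u * R * ((M-ε)*m) := by
          exact mul_le_mul_of_nonneg_right
            (mul_le_mul_of_nonneg_left hexp1 hu.le) hden.le
      _ = u * ((m+ε)*M) := by
          rw [hR_def]; field_simp; exact div_self (sub_pos.mpr hεM).ne'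
  have hdn : u * ((M-ε)*m) ≤ u' * ((m+ε)*M) := by
    have e1 : u = u' * Real.exp (z' - z) := by
      rw [hu_def, hu'_def, ← Real.exp_add]; congr 1; ring
    calc u * ((M-ε)*m) = u' * Real.exp (z'-z) * ((M-ε)*m) := by rw [← e1]
      _ ≤ u' * R * ((M-ε)*m) := by
          exact mul_le_mul_of_nonneg_right
            (mul_le_mul_of_nonneg_left hexp2 hu'.le) hden.le
      _ = u' * ((m+ε)*M) := by
          rw [hR_def]; field_simp; exact div_self (sub_pos.mpr hεM).ne'
  have F1 : u ≤ c → u' * (1-ε) ≤ c + ε := by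
    intro huc
    rcases le_total c 1 with hc1 | hc1
    · have hm1 : m = c := by rw [hm_def, min_eq_right hc1]
      have hM2 : M = 1 := by rw [hM_def, max_eq_left hc1]
      have hup' := hup
      rw [hm1, hM2] at hup'
      nlinarith [mul_le_mul_of_nonneg_right huc (by linarith : (0:ℝ) ≤ c+ε)]
    · have hm1 : m = 1 := by rw [hm_def, min_eq_left hc1]
      have hM2 : M = c := by rw [hM_def, max_eq_right hc1]
      have hup' := hup
      rw [hm1, hM2] at hup'
      nlinarith [mul_le_mul_of_nonneg_right huc (by nlinarith : (0:ℝ) ≤ (1+ε)*c),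
        mul_le_mul_of_nonneg_right hup' (by linarith : (0:ℝ) ≤ 1-ε),
        mul_nonneg (sq_nonneg ε) (by nlinarith : (0:ℝ) ≤ c^2 - 1), hεc]
  have F2 : c < u → c - ε ≤ u' * (1+ε) := by
    intro huc
    rcases le_total c 1 with hc1 | hc1
    · have hm1 : m = c := by rw [hm_def, min_eq_right hc1]
      have hM2 : M = 1 := by rw [hM_def, max_eq_left hc1]
      have hdn' := hdn
      rw [hm1, hM2] at hdn'
      have k0 : (0:ℝ) ≤ (1-ε)*c := mul_nonneg (by linarith) hc0.le
      have k1 : c*((1-ε)*c) ≤ u' * (c+ε) := by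
        nlinarith [mul_le_mul_of_nonneg_right huc.le k0]
      nlinarith [k1, mul_nonneg (sq_nonneg ε) (by nlinarith : (0:ℝ) ≤ 1 - c^2),
        (show (0:ℝ) < c+ε by linarith), (show (0:ℝ) < 1+ε by linarith)]
    · have hm1 : m = 1 := by rw [hm_def, min_eq_left hc1]
      have hM2 : M = c := by rw [hM_def, max_eq_right hc1]
      have hdn' := hdn
      rw [hm1, hM2] at hdn'
      nlinarith [hdn', mul_pos hc0 hc0, hεc]
  have key : ∀ v : ℝ, 0 < v → ((1 + (l11-1)*(1/(1+v)) ≤ l01 * (1/(1+v))) ↔ v ≤ c) := by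
    intro v hv
    have h1v : (0:ℝ) < 1 + v := by linarith
    have e : l01 * (1/(1+v)) - (1 + (l11-1)*(1/(1+v))) = (c - v)/(1+v) := by
      rw [hcdef]; field_simp; ring
    constructor
    · intro hh
      have h2 : 0 ≤ (c-v)/(1+v) := by rw [← e]; linarith
      rw [le_div_iff₀ h1v] at h2
      nlinarith
    · intro hh
      have h2 : 0 ≤ (c-v)/(1+v) := div_nonneg (by linarith) h1v.le
      rw [← e] at h2
      linarith
  have eθ0 : expLoss l01 l11 0 θ x = l01 * (1/(1+u)) := by
    simp [expLoss, logistic, ← hz, ← hu_def]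
  have eθ1 : expLoss l01 l11 1 θ x = 1 + (l11-1) * (1/(1+u)) := by
    simp [expLoss, logistic, ← hz, ← hu_def]
  have eθ'0 : expLoss l01 l11 0 θ' x = l01 * (1/(1+u')) := by
    simp [expLoss, logistic, ← hz', ← hu'_def]
  have eθ'1 : expLoss l01 l11 1 θ' x = 1 + (l11-1) * (1/(1+u')) := by
    simp [expLoss, logistic, ← hz', ← hu'_def]
  have cθ : (expLoss l01 l11 1 θ x ≤ expLoss l01 l11 0 θ x) ↔ u ≤ c := by
    rw [eθ0, eθ1]; exact key u hu
  have cθ' : (expLoss l01 l11 1 θ' x ≤ expLoss l01 l11 0 θ' x) ↔ u' ≤ c := by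
    rw [eθ'0, eθ'1]; exact key u' hu'
  have h1u' : (0:ℝ) < 1 + u' := by linarith
  rcases le_or_gt u c with huc | huc <;> rcases le_or_gt u' c with hu'c | hu'c
  · have oθ : optAct l01 l11 θ x = 1 := by unfold optAct; rw [if_pos (cθ.mpr huc)]
    have oθ' : optAct l01 l11 θ' x = 1 := by unfold optAct; rw [if_pos (cθ'.mpr hu'c)]
    unfold distRate
    rw [oθ, oθ', sub_self]
    linarith
  · have oθ : optAct l01 l11 θ x = 1 := by unfold optAct; rw [if_pos (cθ.mpr huc)]
    have oθ' : optAct l01 l11 θ' x = 0 := by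
      unfold optAct; rw [if_neg (by rw [cθ']; exact not_le.mpr hu'c)]
    unfold distRate
    rw [oθ, oθ', eθ'1, eθ'0]
    have heq : 1 + (l11-1)*(1/(1+u')) - l01*(1/(1+u')) = (u' - c)/(1+u') := by
      rw [hcdef]; field_simp; ring
    rw [heq, div_le_iff₀ h1u']
    linarith [F1 huc]
  · have oθ : optAct l01 l11 θ x = 0 := by
      unfold optAct; rw [if_neg (by rw [cθ]; exact not_le.mpr huc)]
    have oθ' : optAct l01 l11 θ' x = 1 := by unfold optAct; rw [if_pos (cθ'.mpr hu'c)]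
    unfold distRate
    rw [oθ, oθ', eθ'1, eθ'0]
    have heq : l01*(1/(1+u')) - (1 + (l11-1)*(1/(1+u'))) = (c - u')/(1+u') := by
      rw [hcdef]; field_simp; ring
    rw [heq, div_le_iff₀ h1u']
    linarith [F2 huc]
  · have oθ : optAct l01 l11 θ x = 0 := by
      unfold optAct; rw [if_neg (by rw [cθ]; exact not_le.mpr huc)]
    have oθ' : optAct l01 l11 θ' x = 0 := by
      unfold optAct; rw [if_neg (by rw [cθ']; exact not_le.mpr hu'c)]
    unfold distRate
    rw [oθ, oθ', sub_self]
    linarith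
end

section
/- Let I > 0, Δ0 > 0, and Δ1 ≥ 0 with Δ1 ≠ Δ0. Define Ψ(p) = (p·Δ1 + (1−p)·Δ0)² / (p·I) for p ∈ (0,1]. Then Ψ attains its minimum over (0,1] at the unique point p̃ = min(1, Δ0/|Δ1 − Δ0|); that is, Ψ(p̃) ≤ Ψ(p) for all p ∈ (0,1], with strict inequality for every p ≠ p̃. -/
/-- The traditional IDS objective `Ψ(p) = (p·Δ1 + (1−p)·Δ0)²/(p·I)` attains
its minimum over `(0,1]` uniquely at `p̃ = min(1, Δ0/|Δ1 − Δ0|)`. -/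
theorem traditional_IDS_min (I Δ0 Δ1 : ℝ)
    (hI : 0 < I) (hΔ0 : 0 < Δ0) (hΔ1 : 0 ≤ Δ1) (hne : Δ1 ≠ Δ0) :
    min 1 (Δ0 / |Δ1 - Δ0|) ∈ Set.Ioc (0 : ℝ) 1 ∧
    ∀ p ∈ Set.Ioc (0 : ℝ) 1,
      (min 1 (Δ0 / |Δ1 - Δ0|) * Δ1 + (1 - min 1 (Δ0 / |Δ1 - Δ0|)) * Δ0) ^ 2 /
          (min 1 (Δ0 / |Δ1 - Δ0|) * I)
        ≤ (p * Δ1 + (1 - p) * Δ0) ^ 2 / (p * I) ∧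
      (p ≠ min 1 (Δ0 / |Δ1 - Δ0|) →
        (min 1 (Δ0 / |Δ1 - Δ0|) * Δ1 + (1 - min 1 (Δ0 / |Δ1 - Δ0|)) * Δ0) ^ 2 /
            (min 1 (Δ0 / |Δ1 - Δ0|) * I)
          < (p * Δ1 + (1 - p) * Δ0) ^ 2 / (p * I)) := by
  have hd : Δ1 - Δ0 ≠ 0 := sub_ne_zero.mpr hne
  have ha : 0 < |Δ1 - Δ0| := abs_pos.mpr hd
  set a := |Δ1 - Δ0| with haeq
  set q := min 1 (Δ0 / a) with hqeq
  have hq0 : 0 < q := lt_min one_pos (div_pos hΔ0 ha)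
  have hq1 : q ≤ 1 := min_le_left _ _
  have habs : a ^ 2 = (Δ1 - Δ0) ^ 2 := sq_abs _
  refine ⟨⟨hq0, hq1⟩, ?_⟩
  rintro p ⟨hp0, hp1⟩
  have hkey : p ≠ q → (q * Δ1 + (1 - q) * Δ0) ^ 2 * p < (p * Δ1 + (1 - p) * Δ0) ^ 2 * q := by
    intro hpq
    by_cases hc : Δ0 / a ≤ 1
    · have hq : q = Δ0 / a := min_eq_right hc
      have hqa : q * a = Δ0 := by rw [hq]; field_simp
      have hne2 : a * p - Δ0 ≠ 0 := by
        intro h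
        apply hpq
        have : a * p = Δ0 := by linarith
        rw [hq]
        field_simp
        linarith
      have hsq : 0 < (a * p - Δ0) ^ 2 := by
        rcases lt_or_gt_of_ne hne2 with h | h <;> nlinarith
      have hid : (p * Δ1 + (1 - p) * Δ0) ^ 2 * q - (q * Δ1 + (1 - q) * Δ0) ^ 2 * p
          = q * (a * p - Δ0) ^ 2 := by
        linear_combination (p * q ^ 2 - p ^ 2 * q) * habs + (2 * p * Δ0 - p * (q * a + Δ0)) * hqa
      nlinarith [mul_pos hq0 hsq]
    · push_neg at hc
      have hq : q = 1 := min_eq_left hc.le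
      have haΔ : a < Δ0 := by
        have := (one_lt_div ha).mp hc
        linarith
      have hd2 : (Δ1 - Δ0) ^ 2 < Δ0 ^ 2 := by nlinarith [habs, ha]
      have hp1' : p < 1 := lt_of_le_of_ne hp1 (by rw [hq] at hpq; exact hpq)
      rw [hq]
      nlinarith [mul_pos (by linarith : (0:ℝ) < 1 - p) (by nlinarith : 0 < Δ0 ^ 2 - (Δ1 - Δ0) ^ 2 * p)]
  constructor
  · rcases eq_or_ne p q with rfl | hpq
    · exact le_refl _
    · rw [div_le_div_iff₀ (by positivity) (by positivity)]
      nlinarith [mul_le_mul_of_nonneg_right (hkey hpq).le hI.le]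
  · intro hpq
    rw [div_lt_div_iff₀ (by positivity) (by positivity)]
    nlinarith [mul_lt_mul_of_pos_right (hkey hpq) hI]
end
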